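/- Let A ∈ ℂ^{m×n} be nonzero with Moore–Penrose pseudoinverse A†, and let X ∈ ℂ^{m×n} satisfy: the null space of X equals the null space of A and the null space of X* equals the null space of A*. Suppose J(X;A) < 1/2. Then max(κ(X A†), κ(A† X)) ≤ (1 + √(2 J(X;A))) / (1 − √(2 J(X;A))), where for a nonzero matrix M, κ(M) := ‖M‖₂ ‖M†‖₂ is the generalized condition number defined via the Moore–Penrose pseudoinverse M† and the spectral norm. -/

import Mathlib

open scoped Matrix

/-- `B` is the Moore–Penrose pseudoinverse of `A`. -/
def IsMPInv {m n : ℕ} (A : Matrix (Fin m) (Fin n) ℂ) (B : Matrix (Fin n) (Fin m) ℂ) : Prop :=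
  A * B * A = A ∧ B * A * B = B ∧ (A * B)ᴴ = A * B ∧ (B * A)ᴴ = B * A

/-- The spectral norm (largest singular value): the operator norm of the matrix as a map
between Euclidean spaces. -/
noncomputable def specNorm {m n : ℕ} (M : Matrix (Fin m) (Fin n) ℂ) : ℝ :=
  ‖LinearMap.toContinuousLinearMap (Matrix.toEuclideanLin M)‖

/-- Squared Frobenius norm. -/
noncomputable def frobSq {m n : ℕ} (M : Matrix (Fin m) (Fin n) ℂ) : ℝ :=
  ∑ i, ∑ j, ‖M i j‖ ^ 2

/-- The misfit functional `J(X;A) = ½‖(X-A)A†‖_F² + ½‖A†(X-A)‖_F²`,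
with the pseudoinverse `Ad` of `A` given explicitly. -/
noncomputable def Jmis {m n : ℕ} (X A : Matrix (Fin m) (Fin n) ℂ)
    (Ad : Matrix (Fin n) (Fin m) ℂ) : ℝ :=
  (1 / 2) * frobSq ((X - A) * Ad) + (1 / 2) * frobSq (Ad * (X - A))

noncomputable def clm {m n : ℕ} (M : Matrix (Fin m) (Fin n) ℂ) :
    EuclideanSpace ℂ (Fin n) →L[ℂ] EuclideanSpace ℂ (Fin m) :=
  LinearMap.toContinuousLinearMap (Matrix.toEuclideanLin M)

lemma clm_mul_apply {a b c : ℕ} (M : Matrix (Fin a) (Fin b) ℂ) (N : Matrix (Fin b) (Fin c) ℂ)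
    (v : EuclideanSpace ℂ (Fin c)) : clm (M * N) v = clm M (clm N v) := by
  simp [clm, Matrix.toEuclideanLin_apply, Matrix.mulVec_mulVec]

lemma clm_add {a b : ℕ} (M N : Matrix (Fin a) (Fin b) ℂ) : clm (M + N) = clm M + clm N := by
  ext v
  simp [clm, Matrix.toEuclideanLin_apply]

lemma clm_proj_le_one {k : ℕ} (M : Matrix (Fin k) (Fin k) ℂ)
    (h1 : Mᴴ = M) (h2 : M * M = M) : ‖clm M‖ ≤ 1 := by
  refine ContinuousLinearMap.opNorm_le_bound _ zero_le_one (fun v => ?_)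
  set T := Matrix.toEuclideanLin M with hT
  have hadj : LinearMap.adjoint T = T := by
    rw [← Matrix.toEuclideanLin_conjTranspose_eq_adjoint, h1]
  have hMM : T (T v) = T v := by
    have : clm (M * M) v = clm M (clm M v) := clm_mul_apply M M v
    rw [h2] at this
    exact this.symm
  have hinner : (inner ℂ (T v) (T v) : ℂ) = inner ℂ (T v) v := by
    have h := LinearMap.adjoint_inner_left (𝕜 := ℂ) T v (T v)
    rw [hadj, hMM] at h
    exact h.symm
  have h1' : (‖T v‖ : ℝ) ^ 2 = RCLike.re (inner ℂ (T v) (T v) : ℂ) := by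
    rw [← inner_self_eq_norm_sq (𝕜 := ℂ)]
  have h2' : RCLike.re (inner ℂ (T v) v : ℂ) ≤ ‖T v‖ * ‖v‖ := by
    calc RCLike.re (inner ℂ (T v) v : ℂ) ≤ ‖(inner ℂ (T v) v : ℂ)‖ := RCLike.re_le_norm _
      _ ≤ ‖T v‖ * ‖v‖ := norm_inner_le_norm _ _
  have hfin : ‖T v‖ ≤ 1 * ‖v‖ := by
    rw [hinner] at h1'
    nlinarith [norm_nonneg (T v), norm_nonneg v]
  exact hfin

lemma clm_le_sqrt_frobSq {a b : ℕ} (M : Matrix (Fin a) (Fin b) ℂ) :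
    ‖clm M‖ ≤ Real.sqrt (frobSq M) := by
  have h0 : 0 ≤ frobSq M := by unfold frobSq; positivity
  refine ContinuousLinearMap.opNorm_le_bound _ (Real.sqrt_nonneg _) (fun v => ?_)
  rw [← Real.sqrt_sq (norm_nonneg v), ← Real.sqrt_mul h0]
  rw [Real.le_sqrt (norm_nonneg _) (by positivity)]
  -- ‖clm M v‖ ^ 2 ≤ frobSq M * ‖v‖ ^ 2
  have hv : (clm M v : EuclideanSpace ℂ (Fin a)) =
      (WithLp.equiv 2 (Fin a → ℂ)).symm (M.mulVec ((WithLp.equiv 2 (Fin b → ℂ)) v)) := rfl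
  have hnorm : ‖clm M v‖ ^ 2 = ∑ i, ‖(M.mulVec ((WithLp.equiv 2 (Fin b → ℂ)) v)) i‖ ^ 2 := by
    rw [hv, EuclideanSpace.norm_eq, Real.sq_sqrt (by positivity)]
    rfl
  rw [hnorm]
  have key : ∀ i, ‖(M.mulVec ((WithLp.equiv 2 (Fin b → ℂ)) v)) i‖ ^ 2 ≤
      (∑ j, ‖M i j‖ ^ 2) * ‖v‖ ^ 2 := by
    intro i
    set ai : EuclideanSpace ℂ (Fin b) :=
      (WithLp.equiv 2 (Fin b → ℂ)).symm (fun j => star (M i j)) with hai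
    have hinner : (inner ℂ ai v : ℂ) = (M.mulVec ((WithLp.equiv 2 (Fin b → ℂ)) v)) i := by
      simp [hai, PiLp.inner_apply, RCLike.inner_apply, Matrix.mulVec, dotProduct, mul_comm]
    have hna : ‖ai‖ ^ 2 = ∑ j, ‖M i j‖ ^ 2 := by
      rw [EuclideanSpace.norm_eq, Real.sq_sqrt (by positivity)]
      simp [hai]
    calc ‖(M.mulVec ((WithLp.equiv 2 (Fin b → ℂ)) v)) i‖ ^ 2
        = ‖(inner ℂ ai v : ℂ)‖ ^ 2 := by rw [hinner]
      _ ≤ (‖ai‖ * ‖v‖) ^ 2 := by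
          have := norm_inner_le_norm (𝕜 := ℂ) ai v
          have h1 : (0:ℝ) ≤ ‖(inner ℂ ai v : ℂ)‖ := norm_nonneg _
          nlinarith
      _ = (∑ j, ‖M i j‖ ^ 2) * ‖v‖ ^ 2 := by rw [mul_pow, hna]
  calc ∑ i, ‖(M.mulVec ((WithLp.equiv 2 (Fin b → ℂ)) v)) i‖ ^ 2
      ≤ ∑ i, (∑ j, ‖M i j‖ ^ 2) * ‖v‖ ^ 2 := Finset.sum_le_sum (fun i _ => key i)
    _ = frobSq M * ‖v‖ ^ 2 := by rw [← Finset.sum_mul]; rfl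

lemma key_bound {k : ℕ} (N G R : Matrix (Fin k) (Fin k) ℂ) (ε : ℝ)
    (hG1 : Gᴴ = G) (hG2 : G * G = G)
    (hD : ‖clm (N - G)‖ ≤ ε)
    (hGR : G * R = R)
    (hNR1 : (N * R)ᴴ = N * R) (hNR2 : (N * R) * (N * R) = N * R)
    (hε : 1 - ε > 0) :
    ‖clm N‖ * ‖clm R‖ ≤ (1 + ε) / (1 - ε) := by
  have hε0 : 0 ≤ ε := le_trans (norm_nonneg _) hD
  have hsplit : clm N = clm G + clm (N - G) := by
    rw [← clm_add, add_sub_cancel]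
  have hN : ‖clm N‖ ≤ 1 + ε := by
    rw [hsplit]
    calc ‖clm G + clm (N - G)‖ ≤ ‖clm G‖ + ‖clm (N - G)‖ := norm_add_le _ _
      _ ≤ 1 + ε := add_le_add (clm_proj_le_one G hG1 hG2) hD
  have hRb : ‖clm R‖ ≤ 1 / (1 - ε) := by
    refine ContinuousLinearMap.opNorm_le_bound _ (by positivity) (fun w => ?_)
    set u := clm R w with hu
    have hGu : clm G u = u := by rw [hu, ← clm_mul_apply, hGR]
    have hNu : clm N u = clm (N * R) w := (clm_mul_apply N R w).symm
    have hub : ‖clm (N * R) w‖ ≤ ‖w‖ := by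
      calc ‖clm (N * R) w‖ ≤ ‖clm (N * R)‖ * ‖w‖ := ContinuousLinearMap.le_opNorm _ _
        _ ≤ 1 * ‖w‖ := by
            exact mul_le_mul_of_nonneg_right (clm_proj_le_one _ hNR1 hNR2) (norm_nonneg _)
        _ = ‖w‖ := one_mul _
    have hd : ‖clm (N - G) u‖ ≤ ε * ‖u‖ := by
      calc ‖clm (N - G) u‖ ≤ ‖clm (N - G)‖ * ‖u‖ := ContinuousLinearMap.le_opNorm _ _
        _ ≤ ε * ‖u‖ := mul_le_mul_of_nonneg_right hD (norm_nonneg _)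
    have hlow : (1 - ε) * ‖u‖ ≤ ‖clm N u‖ := by
      have h1 : clm N u = u + clm (N - G) u := by
        rw [hsplit]; simp [hGu]
      have h2 : ‖u‖ ≤ ‖clm N u‖ + ‖clm (N - G) u‖ := by
        have : u = clm N u - clm (N - G) u := by rw [h1]; abel
        calc ‖u‖ = ‖clm N u - clm (N - G) u‖ := by rw [← this]
          _ ≤ ‖clm N u‖ + ‖clm (N - G) u‖ := norm_sub_le _ _
      nlinarith [norm_nonneg u]
    have : (1 - ε) * ‖u‖ ≤ ‖w‖ := by
      rw [hNu] at hlow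
      linarith
    rw [div_mul_eq_mul_div, le_div_iff₀ hε]
    linarith
  calc ‖clm N‖ * ‖clm R‖ ≤ (1 + ε) * (1 / (1 - ε)) :=
        mul_le_mul hN hRb (norm_nonneg _) (by positivity)
    _ = (1 + ε) / (1 - ε) := by rw [mul_one_div]

/-- if `A ≠ 0`, the null spaces of `X` and `X*` equal those of `A` and `A*`,
and `J(X;A) < 1/2`, then the generalized condition numbers `κ(X A†) = ‖X A†‖₂ ‖(X A†)†‖₂`
and `κ(A† X)` are both at most `(1 + √(2J))/(1 - √(2J))`. -/
theorem stmt13 {m n : ℕ} (A X : Matrix (Fin m) (Fin n) ℂ) (Ad : Matrix (Fin n) (Fin m) ℂ)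
    (hA : A ≠ 0) (hMP : IsMPInv A Ad)
    (hR : ∀ v : Fin n → ℂ, X.mulVec v = 0 ↔ A.mulVec v = 0)
    (hL : ∀ v : Fin m → ℂ, Xᴴ.mulVec v = 0 ↔ Aᴴ.mulVec v = 0)
    (hJ : Jmis X A Ad < 1 / 2)
    (P : Matrix (Fin m) (Fin m) ℂ) (hP : IsMPInv (X * Ad) P)
    (Q : Matrix (Fin n) (Fin n) ℂ) (hQ : IsMPInv (Ad * X) Q) :
    max (specNorm (X * Ad) * specNorm P) (specNorm (Ad * X) * specNorm Q) ≤
      (1 + Real.sqrt (2 * Jmis X A Ad)) / (1 - Real.sqrt (2 * Jmis X A Ad)) := by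
    -- setup
  set ε := Real.sqrt (2 * Jmis X A Ad) with hεdef
  have hf1 : 0 ≤ frobSq ((X - A) * Ad) := by unfold frobSq; positivity
  have hf2 : 0 ≤ frobSq (Ad * (X - A)) := by unfold frobSq; positivity
  have hJ0 : 0 ≤ Jmis X A Ad := by unfold Jmis; linarith
  have hε1 : ε < 1 := by
    rw [hεdef, Real.sqrt_lt' one_pos]
    linarith
  have hεpos : 1 - ε > 0 := by linarith
  -- spectral norm of perturbations
  have hD1 : ‖clm ((X - A) * Ad)‖ ≤ ε := by
    refine le_trans (clm_le_sqrt_frobSq _) (Real.sqrt_le_sqrt ?_)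
    unfold Jmis at *
    linarith
  have hD2 : ‖clm (Ad * (X - A))‖ ≤ ε := by
    refine le_trans (clm_le_sqrt_frobSq _) (Real.sqrt_le_sqrt ?_)
    unfold Jmis at *
    linarith
  -- algebraic identities
  have h0 : Ad * (A * Ad) = Ad := by rw [← Matrix.mul_assoc]; exact hMP.2.1
  have h1 : (A * Ad) * Adᴴ = Adᴴ := by
    calc (A * Ad) * Adᴴ = (A * Ad)ᴴ * Adᴴ := by rw [hMP.2.2.1]
      _ = (Ad * (A * Ad))ᴴ := (Matrix.conjTranspose_mul Ad (A * Ad)).symm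
      _ = Adᴴ := by rw [h0]
  have hPexp : (X * Ad)ᴴ * Pᴴ * P = P := by
    calc (X * Ad)ᴴ * Pᴴ * P = (P * (X * Ad))ᴴ * P := by
          rw [Matrix.conjTranspose_mul P (X * Ad)]
      _ = (P * (X * Ad)) * P := by rw [hP.2.2.2]
      _ = P := hP.2.1
  have hexpand : (X * Ad)ᴴ * Pᴴ * P = Adᴴ * (Xᴴ * (Pᴴ * P)) := by
    rw [Matrix.conjTranspose_mul X Ad, Matrix.mul_assoc, Matrix.mul_assoc]
  have hGRP : (A * Ad) * P = P := by
    have e2 : (A * Ad) * (Adᴴ * (Xᴴ * (Pᴴ * P))) = ((A * Ad) * Adᴴ) * (Xᴴ * (Pᴴ * P)) :=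
      (Matrix.mul_assoc _ _ _).symm
    calc (A * Ad) * P = (A * Ad) * (Adᴴ * (Xᴴ * (Pᴴ * P))) := by rw [← hexpand, hPexp]
      _ = ((A * Ad) * Adᴴ) * (Xᴴ * (Pᴴ * P)) := e2
      _ = Adᴴ * (Xᴴ * (Pᴴ * P)) := by rw [h1]
      _ = P := by rw [← hexpand, hPexp]
  have hG2P : (A * Ad) * (A * Ad) = A * Ad := by
    have e : (A * Ad) * (A * Ad) = ((A * Ad) * A) * Ad := (Matrix.mul_assoc _ _ _).symm
    rw [e, hMP.1]
  have hNR2P : ((X * Ad) * P) * ((X * Ad) * P) = (X * Ad) * P := by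
    have e : ((X * Ad) * P) * ((X * Ad) * P) = (X * Ad) * (P * (X * Ad) * P) := by
      rw [Matrix.mul_assoc (X * Ad) P ((X * Ad) * P), ← Matrix.mul_assoc P (X * Ad) P]
    rw [e, hP.2.1]
  -- the X * (Ad * A) = X identity, from the null space hypothesis
  have hXAdA : X * (Ad * A) = X := by
    have hv : ∀ v : Fin n → ℂ, (X * (Ad * A)).mulVec v = X.mulVec v := by
      intro v
      have hA0 : A.mulVec ((Ad * A).mulVec v - v) = 0 := by
        rw [Matrix.mulVec_sub, Matrix.mulVec_mulVec, ← Matrix.mul_assoc, hMP.1, sub_self]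
      have hX0 := (hR _).mpr hA0
      rw [Matrix.mulVec_sub, Matrix.mulVec_mulVec, sub_eq_zero] at hX0
      exact hX0
    apply Matrix.toLin'.injective
    exact LinearMap.ext fun v => by simp only [Matrix.toLin'_apply, hv v]
  have hAdAXh : (Ad * A) * Xᴴ = Xᴴ := by
    calc (Ad * A) * Xᴴ = (Ad * A)ᴴ * Xᴴ := by rw [hMP.2.2.2]
      _ = (X * (Ad * A))ᴴ := (Matrix.conjTranspose_mul X (Ad * A)).symm
      _ = Xᴴ := by rw [hXAdA]
  have hQexp : (Ad * X)ᴴ * Qᴴ * Q = Q := by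
    calc (Ad * X)ᴴ * Qᴴ * Q = (Q * (Ad * X))ᴴ * Q := by
          rw [Matrix.conjTranspose_mul Q (Ad * X)]
      _ = (Q * (Ad * X)) * Q := by rw [hQ.2.2.2]
      _ = Q := hQ.2.1
  have hexpandQ : (Ad * X)ᴴ * Qᴴ * Q = Xᴴ * (Adᴴ * (Qᴴ * Q)) := by
    rw [Matrix.conjTranspose_mul Ad X, Matrix.mul_assoc, Matrix.mul_assoc]
  have hGRQ : (Ad * A) * Q = Q := by
    have e2 : (Ad * A) * (Xᴴ * (Adᴴ * (Qᴴ * Q))) = ((Ad * A) * Xᴴ) * (Adᴴ * (Qᴴ * Q)) :=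
      (Matrix.mul_assoc _ _ _).symm
    calc (Ad * A) * Q = (Ad * A) * (Xᴴ * (Adᴴ * (Qᴴ * Q))) := by rw [← hexpandQ, hQexp]
      _ = ((Ad * A) * Xᴴ) * (Adᴴ * (Qᴴ * Q)) := e2
      _ = Xᴴ * (Adᴴ * (Qᴴ * Q)) := by rw [hAdAXh]
      _ = Q := by rw [← hexpandQ, hQexp]
  have hG2Q : (Ad * A) * (Ad * A) = Ad * A := by
    have e : (Ad * A) * (Ad * A) = ((Ad * A) * Ad) * A := (Matrix.mul_assoc _ _ _).symm
    rw [e, hMP.2.1]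
  have hNR2Q : ((Ad * X) * Q) * ((Ad * X) * Q) = (Ad * X) * Q := by
    have e : ((Ad * X) * Q) * ((Ad * X) * Q) = (Ad * X) * (Q * (Ad * X) * Q) := by
      rw [Matrix.mul_assoc (Ad * X) Q ((Ad * X) * Q), ← Matrix.mul_assoc Q (Ad * X) Q]
    rw [e, hQ.2.1]
  -- apply the key bound twice
  have hsub1 : X * Ad - A * Ad = (X - A) * Ad := (Matrix.sub_mul X A Ad).symm
  have hsub2 : Ad * X - Ad * A = Ad * (X - A) := (Matrix.mul_sub Ad X A).symm
  have hb1 : ‖clm (X * Ad)‖ * ‖clm P‖ ≤ (1 + ε) / (1 - ε) := by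
    refine key_bound (X * Ad) (A * Ad) P ε hMP.2.2.1 hG2P ?_ hGRP hP.2.2.1 hNR2P hεpos
    rw [hsub1]; exact hD1
  have hb2 : ‖clm (Ad * X)‖ * ‖clm Q‖ ≤ (1 + ε) / (1 - ε) := by
    refine key_bound (Ad * X) (Ad * A) Q ε hMP.2.2.2 hG2Q ?_ hGRQ hQ.2.2.1 hNR2Q hεpos
    rw [hsub2]; exact hD2
  have hspec : ∀ {a b : ℕ} (M : Matrix (Fin a) (Fin b) ℂ), specNorm M = ‖clm M‖ :=
    fun _ => rfl
  rw [max_le_iff]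
  constructor
  · rw [hspec (X * Ad), hspec P]; exact hb1
  · rw [hspec (Ad * X), hspec Q]; exact hb2
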